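/- arXiv:2507.06641 — 2 statements merged into one kernel-verified Lean document; each statement's English description precedes it below -/
import Mathlib

section
/- In the special case γ = 1 of the singular Gronwall inequality: if b ≥ 0, α > 0, a(t) is nonnegative and locally integrable on [0,T), u is nonnegative and locally integrable on [0,T), and u(t) ≤ a(t) + b ∫_0^t (t-s)^{α-1} u(s) ds a.e. on (0,T), and moreover a ≡ 0, then u(t) = 0 for almost every t ∈ (0,T). -/
open MeasureTheory

lemma inner_calc (α : ℝ) (hα : 0 < α) (s c' : ℝ) (hsc : s ≤ c') :
    ∫⁻ t in Set.Ioo s c', ENNReal.ofReal ((t - s) ^ (α - 1)) =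
      ENNReal.ofReal ((c' - s) ^ α / α) := by
  have hii : IntervalIntegrable (fun x : ℝ => (x - s) ^ (α - 1)) volume s c' := by
    have := (intervalIntegral.intervalIntegrable_rpow' (a := 0) (b := c' - s)
      (r := α - 1) (by linarith)).comp_sub_right s
    simpa using this
  have hInt : IntegrableOn (fun x : ℝ => (x - s) ^ (α - 1)) (Set.Ioo s c') volume := by
    exact ((intervalIntegrable_iff_integrableOn_Ioc_of_le hsc).mp hii).mono_set
      Set.Ioo_subset_Ioc_self
  have hval : ∫ t in Set.Ioo s c', (t - s) ^ (α - 1) = (c' - s) ^ α / α := by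
    rw [← MeasureTheory.integral_Ioc_eq_integral_Ioo,
      ← intervalIntegral.integral_of_le hsc]
    have h1 : ∫ x in s..c', (x - s) ^ (α - 1) = ∫ x in (0:ℝ)..(c' - s), x ^ (α - 1) := by
      simpa using intervalIntegral.integral_comp_sub_right (a := s) (b := c') (fun x : ℝ => x ^ (α - 1)) s
    rw [h1, integral_rpow (Or.inl (by linarith))]
    rw [Real.zero_rpow (by linarith : α - 1 + 1 ≠ 0)]
    ring_nf
  rw [← hval]
  rw [MeasureTheory.ofReal_integral_eq_lintegral_ofReal hInt]
  · filter_upwards [MeasureTheory.ae_restrict_mem measurableSet_Ioo] with t ht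
    exact Real.rpow_nonneg (by linarith [ht.1]) _

lemma key_step (b α δ τ c' : ℝ) (hb : 0 ≤ b) (hα : 0 < α) (hδ : 0 < δ)
    (hsmall : b * (δ ^ α / α) ≤ 1/2)
    (hτ : τ ≤ c') (hc' : c' ≤ τ + δ)
    (v : ℝ → ℝ) (hv : Measurable v) (hv0 : ∀ x, 0 ≤ v x)
    (hfin : ∫⁻ s in Set.Ioo τ c', ENNReal.ofReal (v s) < ⊤)
    (hineq : ∀ᵐ t, t ∈ Set.Ioo τ c' → ENNReal.ofReal (v t) ≤
      ENNReal.ofReal b * ∫⁻ s in Set.Ioo τ t,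
        ENNReal.ofReal ((t - s) ^ (α - 1)) * ENNReal.ofReal (v s)) :
    ∀ᵐ t, t ∈ Set.Ioo τ c' → v t = 0 := by
  set I := ∫⁻ t in Set.Ioo τ c', ENNReal.ofReal (v t) with hI
  set F : ℝ → ℝ → ENNReal := fun t s => Set.indicator (Set.Ioo τ t)
    (fun s => ENNReal.ofReal ((t - s) ^ (α - 1)) * ENNReal.ofReal (v s)) s with hF
  -- step 1
  have step1 : I ≤ ENNReal.ofReal b * ∫⁻ t in Set.Ioo τ c', ∫⁻ s, F t s := by
    rw [← MeasureTheory.lintegral_const_mul' _ _ ENNReal.ofReal_ne_top]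
    refine MeasureTheory.lintegral_mono_ae ?_
    rw [MeasureTheory.ae_restrict_iff' measurableSet_Ioo]
    filter_upwards [hineq] with t ht hmem
    calc ENNReal.ofReal (v t) ≤ ENNReal.ofReal b * ∫⁻ s in Set.Ioo τ t,
          ENNReal.ofReal ((t - s) ^ (α - 1)) * ENNReal.ofReal (v s) := ht hmem
      _ = ENNReal.ofReal b * ∫⁻ s, F t s := by
          rw [← MeasureTheory.lintegral_indicator measurableSet_Ioo]
  -- step 2: swap
  have hmeas : Measurable (Function.uncurry F) := by
    have : Function.uncurry F = Set.indicator {p : ℝ × ℝ | τ < p.2 ∧ p.2 < p.1}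
        (fun p => ENNReal.ofReal ((p.1 - p.2) ^ (α - 1)) * ENNReal.ofReal (v p.2)) := by
      funext p
      simp only [Function.uncurry, hF, Set.indicator_apply, Set.mem_Ioo, Set.mem_setOf_eq]
    rw [this]
    refine Measurable.indicator ?_ ?_
    · have h1 : Measurable (fun p : ℝ × ℝ => (p.1 - p.2) ^ (α - 1)) := by fun_prop
      exact (h1.ennreal_ofReal).mul ((hv.comp measurable_snd).ennreal_ofReal)
    · exact MeasurableSet.inter (measurableSet_lt measurable_const measurable_snd)
        (measurableSet_lt measurable_snd measurable_fst)
  have step2 : ∫⁻ t in Set.Ioo τ c', ∫⁻ s, F t s =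
      ∫⁻ s, ∫⁻ t in Set.Ioo τ c', F t s := by
    exact MeasureTheory.lintegral_lintegral_swap hmeas.aemeasurable
  -- step 3: pointwise bound on inner swapped integral
  have step3 : ∀ s, (∫⁻ t in Set.Ioo τ c', F t s) ≤
      Set.indicator (Set.Ioo τ c')
        (fun s => ENNReal.ofReal (δ ^ α / α) * ENNReal.ofReal (v s)) s := by
    intro s
    by_cases hs : s ∈ Set.Ioo τ c'
    · rw [Set.indicator_of_mem hs]
      have hcong : ∀ t ∈ Set.Ioo τ c', F t s =
          Set.indicator (Set.Ioi s)
            (fun t => ENNReal.ofReal ((t - s) ^ (α - 1)) * ENNReal.ofReal (v s)) t := by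
        intro t _
        simp only [hF, Set.indicator_apply, Set.mem_Ioo, Set.mem_Ioi]
        by_cases h : s < t
        · simp [h, hs.1]
        · simp [h]
      rw [MeasureTheory.setLIntegral_congr_fun measurableSet_Ioo
        hcong]
      rw [MeasureTheory.lintegral_indicator measurableSet_Ioi,
        MeasureTheory.Measure.restrict_restrict measurableSet_Ioi]
      have hset : Set.Ioi s ∩ Set.Ioo τ c' = Set.Ioo s c' := by
        ext x
        simp only [Set.mem_inter_iff, Set.mem_Ioi, Set.mem_Ioo]
        constructor
        · rintro ⟨h1, h2, h3⟩; exact ⟨h1, h3⟩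
        · rintro ⟨h1, h2⟩; exact ⟨h1, lt_trans hs.1 h1, h2⟩
      rw [hset, MeasureTheory.lintegral_mul_const' _ _ ENNReal.ofReal_ne_top,
        inner_calc α hα s c' hs.2.le]
      refine mul_le_mul_left (ENNReal.ofReal_le_ofReal ?_) _
      have h1 : (c' - s) ^ α ≤ δ ^ α :=
        Real.rpow_le_rpow (by linarith [hs.2]) (by linarith [hs.1]) hα.le
      exact (div_le_div_iff_of_pos_right hα).mpr h1
    · rw [Set.indicator_of_notMem hs]
      have : ∀ t ∈ Set.Ioo τ c', F t s = 0 := by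
        intro t ht
        simp only [hF, Set.indicator_apply, Set.mem_Ioo]
        rw [Set.mem_Ioo] at hs
        push_neg at hs
        by_cases h1 : τ < s
        · have : ¬ s < t := by
            intro h2
            exact absurd (hs h1) (by linarith [ht.2])
          simp [this]
        · simp [h1]
      rw [MeasureTheory.setLIntegral_congr_fun measurableSet_Ioo
        this]
      simp
  -- put together
  have total : I ≤ ENNReal.ofReal (b * (δ ^ α / α)) * I := by
    calc I ≤ ENNReal.ofReal b * ∫⁻ t in Set.Ioo τ c', ∫⁻ s, F t s := step1
      _ = ENNReal.ofReal b * ∫⁻ s, ∫⁻ t in Set.Ioo τ c', F t s := by rw [step2]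
      _ ≤ ENNReal.ofReal b * ∫⁻ s, Set.indicator (Set.Ioo τ c')
            (fun s => ENNReal.ofReal (δ ^ α / α) * ENNReal.ofReal (v s)) s := by
          gcongr with s
          exact step3 s
      _ = ENNReal.ofReal b * (ENNReal.ofReal (δ ^ α / α) * I) := by
          rw [MeasureTheory.lintegral_indicator measurableSet_Ioo,
            MeasureTheory.lintegral_const_mul' _ _ ENNReal.ofReal_ne_top]
      _ = ENNReal.ofReal (b * (δ ^ α / α)) * I := by
          rw [← mul_assoc, ← ENNReal.ofReal_mul hb]
  have hI0 : I = 0 := by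
    by_contra h
    have hlt : ENNReal.ofReal (b * (δ ^ α / α)) * I < 1 * I := by
      rw [mul_comm _ I, mul_comm 1 I]; refine ENNReal.mul_lt_mul_right h hfin.ne ?_
      calc ENNReal.ofReal (b * (δ ^ α / α)) ≤ ENNReal.ofReal (1/2) :=
            ENNReal.ofReal_le_ofReal hsmall
        _ < 1 := by
            rw [show (1 : ENNReal) = ENNReal.ofReal 1 by simp]
            exact ENNReal.ofReal_lt_ofReal_iff (by norm_num) |>.mpr (by norm_num)
    rw [one_mul] at hlt
    exact absurd total (not_le.mpr hlt)
  -- conclude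
  have := (MeasureTheory.lintegral_eq_zero_iff
    (hv.ennreal_ofReal)).mp hI0
  rw [Filter.EventuallyEq, MeasureTheory.ae_restrict_iff' measurableSet_Ioo] at this
  filter_upwards [this] with t ht hmem
  have := ht hmem
  simp only [Pi.zero_apply, ENNReal.ofReal_eq_zero] at this
  linarith [hv0 t]

theorem stmt3 (T b α : ℝ) (hT : 0 < T) (hb : 0 ≤ b) (hα : 0 < α)
    (u : ℝ → ℝ)
    (hu0 : ∀ t ∈ Set.Ico (0:ℝ) T, 0 ≤ u t)
    (hui : LocallyIntegrableOn u (Set.Ico (0:ℝ) T))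
    (hineq : ∀ᵐ t : ℝ, t ∈ Set.Ioo (0:ℝ) T →
      u t ≤ b * ∫ s in (0:ℝ)..t, (t - s) ^ (α - 1) * u s) :
    ∀ᵐ t : ℝ, t ∈ Set.Ioo (0:ℝ) T → u t = 0 := by
  set δ : ℝ := (α / (2 * (b + 1))) ^ (α⁻¹) with hδdef
  have hb1 : (0:ℝ) < 2 * (b + 1) := by linarith
  have hδpos : 0 < δ := Real.rpow_pos_of_pos (by positivity) _
  have hδα : δ ^ α = α / (2 * (b + 1)) := Real.rpow_inv_rpow (by positivity) hα.ne'
  have hαne : α ≠ 0 := hα.ne'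
  have h2ne : (2 * (b + 1)) ≠ 0 := hb1.ne'
  have hsmall : b * (δ ^ α / α) ≤ 1 / 2 := by
    rw [hδα]
    have h1 : b * (α / (2 * (b + 1)) / α) = b / (2 * (b + 1)) := by
      field_simp
    rw [h1, div_le_div_iff₀ hb1 (by norm_num : (0:ℝ) < 2)]
    linarith
  suffices H : ∀ c : ℝ, 0 < c → c < T → ∀ᵐ t : ℝ, t ∈ Set.Ioo 0 c → u t = 0 by
    have hall : ∀ᵐ t : ℝ, ∀ k : ℕ, t ∈ Set.Ioo 0 (T - T / ((k:ℝ) + 2)) → u t = 0 := by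
      rw [MeasureTheory.ae_all_iff]
      intro k
      have hk2 : (0:ℝ) < (k:ℝ) + 2 := by positivity
      have h1 : 0 < T / ((k:ℝ) + 2) := by positivity
      have h2 : T / ((k:ℝ) + 2) < T := by
        rw [div_lt_iff₀ hk2]; nlinarith
      exact H _ (by linarith) (by linarith)
    filter_upwards [hall] with t ht hmem
    obtain ⟨k, hk⟩ := exists_nat_ge (T / (T - t))
    have hTt : 0 < T - t := by linarith [hmem.2]
    have hklt : T / ((k:ℝ) + 2) < T - t := by
      rw [div_lt_iff₀ (by positivity : (0:ℝ) < (k:ℝ) + 2)]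
      have h3 : T / (T - t) < (k:ℝ) + 2 := by linarith
      calc T = T / (T - t) * (T - t) := by field_simp
        _ < ((k:ℝ) + 2) * (T - t) := mul_lt_mul_of_pos_right h3 hTt
        _ = (T - t) * ((k:ℝ) + 2) := mul_comm _ _
    exact ht k ⟨hmem.1, by linarith⟩
  intro c hc0 hcT
  have hsub : Set.Icc (0:ℝ) c ⊆ Set.Ico (0:ℝ) T :=
    fun x hx => ⟨hx.1, lt_of_le_of_lt hx.2 hcT⟩
  have hint : IntegrableOn u (Set.Icc 0 c) :=
    hui.integrableOn_compact_subset hsub isCompact_Icc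
  have hg := hint.aestronglyMeasurable
  set v : ℝ → ℝ := fun x => max (hg.mk u x) 0 with hvdef
  have hvmeas : Measurable v :=
    (hg.stronglyMeasurable_mk.measurable).max measurable_const
  have hv0 : ∀ x, 0 ≤ v x := fun x => le_max_right _ _
  have huv : ∀ᵐ x : ℝ, x ∈ Set.Icc (0:ℝ) c → u x = v x := by
    have h1 := hg.ae_eq_mk
    rw [Filter.EventuallyEq, MeasureTheory.ae_restrict_iff' measurableSet_Icc] at h1
    filter_upwards [h1] with x hx hmem
    have h2 := hx hmem
    have h3 := hu0 x (hsub hmem)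
    simp only [hvdef]
    rw [← h2, max_eq_left h3]
  have hvint : IntegrableOn v (Set.Icc 0 c) := by
    apply hint.congr
    rw [Filter.EventuallyEq, MeasureTheory.ae_restrict_iff' measurableSet_Icc]
    exact huv
  have hτne : ∀ τ : ℝ, ∀ᵐ s : ℝ, s ≠ τ := by
    intro τ
    have h1 : (volume ({τ} : Set ℝ)) = 0 := Real.volume_singleton
    have h2 := measure_eq_zero_iff_ae_notMem.mp h1
    filter_upwards [h2] with s hs
    simpa using hs
  have main : ∀ n : ℕ, ∀ᵐ s : ℝ, s ∈ Set.Ioo 0 (min ((n:ℝ) * δ) c) → v s = 0 := by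
    intro n
    induction n with
    | zero =>
      apply Filter.Eventually.of_forall
      intro s hs
      have h2 := hs.2
      have h1 := hs.1
      simp only [Nat.cast_zero, zero_mul] at h2
      rw [min_eq_left hc0.le] at h2
      exact absurd (h1.trans h2) (lt_irrefl 0)
    | succ n ih =>
      push_cast
      set τ := min ((n:ℝ) * δ) c with hτdef
      set c' := min (((n:ℝ) + 1) * δ) c with hc'def
      have hτ0 : 0 ≤ τ := le_min (by positivity) hc0.le
      have hτc' : τ ≤ c' := min_le_min (by nlinarith [hδpos]) le_rfl
      have hc'c : c' ≤ c := min_le_right _ _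
      have hτc : τ ≤ c := min_le_right _ _
      have hc'τδ : c' ≤ τ + δ := by
        rcases le_total ((n:ℝ) * δ) c with h | h
        · rw [hτdef, min_eq_left h]
          calc c' ≤ ((n:ℝ) + 1) * δ := min_le_left _ _
            _ = (n:ℝ) * δ + δ := by ring
        · rw [hτdef, min_eq_right h]
          calc c' ≤ c := hc'c
            _ ≤ c + δ := by linarith
      have hτT : c' < T := lt_of_le_of_lt hc'c hcT
      have hIoosub : Set.Ioo τ c' ⊆ Set.Icc 0 c :=
        fun x hx => ⟨le_trans hτ0 hx.1.le, le_trans hx.2.le hc'c⟩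
      have hfin : ∫⁻ s in Set.Ioo τ c', ENNReal.ofReal (v s) < ⊤ :=
        (hvint.mono_set hIoosub).lintegral_lt_top
      have hu0ae : ∀ᵐ s : ℝ, s ∈ Set.Ioc 0 τ → u s = 0 := by
        filter_upwards [ih, huv, hτne τ] with s hs1 hs2 hs3 hmem
        have hsτ : s ∈ Set.Ioo 0 τ := ⟨hmem.1, lt_of_le_of_ne hmem.2 hs3⟩
        rw [hs2 ⟨hmem.1.le, le_trans hmem.2 hτc⟩]
        exact hs1 hsτ
      have huvae : ∀ᵐ s : ℝ, s ∈ Set.Ioc τ c' → u s = v s := by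
        filter_upwards [huv] with s hs hmem
        exact hs ⟨le_trans hτ0 hmem.1.le, le_trans hmem.2 hc'c⟩
      have hkey : ∀ᵐ t : ℝ, t ∈ Set.Ioo τ c' → ENNReal.ofReal (v t) ≤
          ENNReal.ofReal b * ∫⁻ s in Set.Ioo τ t,
            ENNReal.ofReal ((t - s) ^ (α - 1)) * ENNReal.ofReal (v s) := by
        filter_upwards [hineq, huv] with t hiq huvt hmem
        obtain ⟨hmτ, hmc'⟩ := hmem
        have ht0 : 0 < t := lt_of_le_of_lt hτ0 hmτ
        have htT : t < T := lt_trans hmc' hτT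
        have htc : t ≤ c := le_trans hmc'.le hc'c
        have hut : u t = v t := huvt ⟨ht0.le, htc⟩
        have h1 : u t ≤ b * ∫ s in (0:ℝ)..t, (t - s) ^ (α - 1) * u s := hiq ⟨ht0, htT⟩
        by_cases hInt : IntervalIntegrable (fun s => (t - s) ^ (α - 1) * u s) volume 0 t
        · have hIntIoc : IntegrableOn (fun s => (t - s) ^ (α - 1) * u s) (Set.Ioc 0 t) volume :=
            (intervalIntegrable_iff_integrableOn_Ioc_of_le ht0.le).mp hInt
          have hi1 : IntervalIntegrable (fun s => (t - s) ^ (α - 1) * u s) volume 0 τ :=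
            hInt.mono_set (by
              rw [Set.uIcc_of_le hτ0, Set.uIcc_of_le ht0.le]
              exact Set.Icc_subset_Icc le_rfl hmτ.le)
          have hi2 : IntervalIntegrable (fun s => (t - s) ^ (α - 1) * u s) volume τ t :=
            hInt.mono_set (by
              rw [Set.uIcc_of_le hmτ.le, Set.uIcc_of_le ht0.le]
              exact Set.Icc_subset_Icc hτ0 le_rfl)
          have hsplit : ∫ s in (0:ℝ)..t, (t - s) ^ (α - 1) * u s
              = (∫ s in (0:ℝ)..τ, (t - s) ^ (α - 1) * u s)
                + ∫ s in τ..t, (t - s) ^ (α - 1) * u s :=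
            (intervalIntegral.integral_add_adjacent_intervals hi1 hi2).symm
          have hz1 : ∫ s in (0:ℝ)..τ, (t - s) ^ (α - 1) * u s = 0 := by
            rw [intervalIntegral.integral_congr_ae (g := fun _ => (0:ℝ)) ?_]
            · simp
            · filter_upwards [hu0ae] with s hs hmem2
              rw [Set.uIoc_of_le hτ0] at hmem2
              rw [hs hmem2, mul_zero]
          have hz2 : ∫ s in τ..t, (t - s) ^ (α - 1) * u s
              = ∫ s in τ..t, (t - s) ^ (α - 1) * v s := by
            apply intervalIntegral.integral_congr_ae
            filter_upwards [huvae] with s hs hmem2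
            rw [Set.uIoc_of_le hmτ.le] at hmem2
            rw [hs ⟨hmem2.1, hmem2.2.trans hmc'.le⟩]
          have hIoole : ∫ s in τ..t, (t - s) ^ (α - 1) * v s
              = ∫ s in Set.Ioo τ t, (t - s) ^ (α - 1) * v s := by
            rw [intervalIntegral.integral_of_le hmτ.le,
              MeasureTheory.integral_Ioc_eq_integral_Ioo]
          have hvIntOn : IntegrableOn (fun s => (t - s) ^ (α - 1) * v s)
              (Set.Ioo τ t) volume := by
            apply (hIntIoc.mono_set ?_).congr ?_
            · exact fun x hx => ⟨lt_of_le_of_lt hτ0 hx.1, hx.2.le⟩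
            · rw [Filter.EventuallyEq, MeasureTheory.ae_restrict_iff' measurableSet_Ioo]
              filter_upwards [huvae] with s hs hmem2
              simp only [hs ⟨hmem2.1, hmem2.2.le.trans hmc'.le⟩]
          have hnn : 0 ≤ᵐ[volume.restrict (Set.Ioo τ t)]
              fun s => (t - s) ^ (α - 1) * v s := by
            filter_upwards [MeasureTheory.ae_restrict_mem measurableSet_Ioo] with s hs
            exact mul_nonneg (Real.rpow_nonneg (by linarith [hs.2]) _) (hv0 s)
          have hlift : ENNReal.ofReal (∫ s in Set.Ioo τ t, (t - s) ^ (α - 1) * v s)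
              = ∫⁻ s in Set.Ioo τ t, ENNReal.ofReal ((t - s) ^ (α - 1) * v s) :=
            MeasureTheory.ofReal_integral_eq_lintegral_ofReal hvIntOn hnn
          have hsplitprod : ∫⁻ s in Set.Ioo τ t, ENNReal.ofReal ((t - s) ^ (α - 1) * v s)
              = ∫⁻ s in Set.Ioo τ t,
                  ENNReal.ofReal ((t - s) ^ (α - 1)) * ENNReal.ofReal (v s) := by
            apply MeasureTheory.setLIntegral_congr_fun measurableSet_Ioo
            intro s hs
            exact ENNReal.ofReal_mul (Real.rpow_nonneg (by linarith [hs.2]) _)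
          calc ENNReal.ofReal (v t) = ENNReal.ofReal (u t) := by rw [hut]
            _ ≤ ENNReal.ofReal (b * ∫ s in (0:ℝ)..t, (t - s) ^ (α - 1) * u s) :=
                ENNReal.ofReal_le_ofReal h1
            _ = ENNReal.ofReal b
                * ENNReal.ofReal (∫ s in Set.Ioo τ t, (t - s) ^ (α - 1) * v s) := by
                rw [hsplit, hz1, zero_add, hz2, hIoole, ENNReal.ofReal_mul hb]
            _ = ENNReal.ofReal b * ∫⁻ s in Set.Ioo τ t,
                  ENNReal.ofReal ((t - s) ^ (α - 1)) * ENNReal.ofReal (v s) := by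
                rw [hlift, hsplitprod]
        · rw [intervalIntegral.integral_undef hInt, mul_zero] at h1
          have h2 : u t = 0 := le_antisymm h1 (hu0 t ⟨ht0.le, htT⟩)
          rw [← hut, h2]
          simp
      have hnew := key_step b α δ τ c' hb hα hδpos hsmall hτc' hc'τδ v hvmeas hv0 hfin hkey
      filter_upwards [ih, hnew, hτne τ] with s h1 h2 h3 hmem
      rcases lt_trichotomy s τ with h | h | h
      · exact h1 ⟨hmem.1, h⟩
      · exact absurd h h3
      · exact h2 ⟨h, hmem.2⟩
  obtain ⟨n, hn⟩ := exists_nat_ge (c / δ)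
  have hmin : min ((n:ℝ) * δ) c = c := min_eq_right ((div_le_iff₀ hδpos).mp hn)
  have hmain := main n
  rw [hmin] at hmain
  filter_upwards [hmain, huv] with t h1 h2 hmem
  rw [h2 ⟨hmem.1.le, hmem.2.le⟩]
  exact h1 hmem
end

section
/- Let q be a continuous function on [0,T] and 1 < α < 2. If y : [0,T] → ℝ is continuous and satisfies y(t) = -(1/Γ(α)) ∫_0^t (t-s)^{α-1} q(s) y(s) ds for all t ∈ [0,T], then y(t) = 0 for all t ∈ [0,T]. -/
theorem stmt4 (T α : ℝ) (hT : 0 < T) (hα1 : 1 < α) (hα2 : α < 2)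
    (q y : ℝ → ℝ) (hq : ContinuousOn q (Set.Icc 0 T)) (hy : ContinuousOn y (Set.Icc 0 T))
    (heq : ∀ t ∈ Set.Icc (0:ℝ) T,
      y t = -(1 / Real.Gamma α) * ∫ s in (0:ℝ)..t, (t - s) ^ (α - 1) * q s * y s) :
    ∀ t ∈ Set.Icc (0:ℝ) T, y t = 0 := by
  have hα0 : (0:ℝ) < α := by linarith
  have hΓ : 0 < Real.Gamma α := Real.Gamma_pos_of_pos hα0
  have hαm1 : (0:ℝ) ≤ α - 1 := by linarith
  -- bound for q
  obtain ⟨C₀, hC₀⟩ := (isCompact_Icc).exists_bound_of_continuousOn hq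
  set C : ℝ := max C₀ 0 with hCdef
  have hC0 : 0 ≤ C := le_max_right _ _
  have hC : ∀ x ∈ Set.Icc (0:ℝ) T, |q x| ≤ C := fun x hx =>
    le_trans (hC₀ x hx) (le_max_left _ _)
  -- continuous extension of |y|
  set proj : ℝ → ℝ := fun s => max 0 (min s T) with hprojdef
  have hproj_cont : Continuous proj := continuous_const.max (continuous_id.min continuous_const)
  have hproj_mem : ∀ s, proj s ∈ Set.Icc (0:ℝ) T := by
    intro s
    refine ⟨le_max_left _ _, max_le ?_ (min_le_right _ _)⟩
    exact hT.le
  have hproj_eq : ∀ s ∈ Set.Icc (0:ℝ) T, proj s = s := by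
    intro s hs
    simp [hprojdef, min_eq_left hs.2, max_eq_right hs.1]
  set g : ℝ → ℝ := fun s => |y (proj s)| with hgdef
  have hg_cont : Continuous g := by
    have h : Continuous fun s => y (proj s) := by
      rw [← continuousOn_univ]
      exact hy.comp hproj_cont.continuousOn fun s _ => hproj_mem s
    exact h.abs
  have hg_eq : ∀ s ∈ Set.Icc (0:ℝ) T, g s = |y s| := fun s hs => by
    simp [hgdef, hproj_eq s hs]
  have hg_nonneg : ∀ s, 0 ≤ g s := fun s => abs_nonneg _
  set K : ℝ := (1 / Real.Gamma α) * (T ^ (α - 1) * C) with hKdef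
  have hK0 : 0 ≤ K := by
    apply mul_nonneg (by positivity)
    exact mul_nonneg (Real.rpow_nonneg hT.le _) hC0
  -- the primitive
  set f : ℝ → ℝ := fun t => ∫ s in (0:ℝ)..t, g s with hfdef
  have hf_deriv : ∀ t : ℝ, HasDerivAt f (g t) t := by
    intro t
    exact intervalIntegral.integral_hasDerivAt_right
      (hg_cont.intervalIntegrable _ _)
      (hg_cont.stronglyMeasurableAtFilter _ _)
      hg_cont.continuousAt
  -- key inequality
  have key : ∀ t ∈ Set.Icc (0:ℝ) T, |y t| ≤ K * f t := by
    intro t ht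
    have h0t : (0:ℝ) ≤ t := ht.1
    have htT : t ≤ T := ht.2
    have hsub : Set.Icc (0:ℝ) t ⊆ Set.Icc 0 T := Set.Icc_subset_Icc le_rfl htT
    have hcont1 : ContinuousOn (fun s => (t - s) ^ (α - 1) * q s * y s) (Set.Icc 0 t) := by
      apply ContinuousOn.mul
      apply ContinuousOn.mul
      · exact ((continuous_const.sub continuous_id).rpow_const
          (fun x => Or.inr hαm1)).continuousOn
      · exact hq.mono hsub
      · exact hy.mono hsub
    have hint1 : IntervalIntegrable (fun s => (t - s) ^ (α - 1) * q s * y s)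
        MeasureTheory.volume 0 t := by
      apply ContinuousOn.intervalIntegrable
      rwa [Set.uIcc_of_le h0t]
    rw [heq t ht, abs_mul, abs_neg, abs_of_nonneg (by positivity : (0:ℝ) ≤ 1 / Real.Gamma α)]
    have hb1 : |∫ s in (0:ℝ)..t, (t - s) ^ (α - 1) * q s * y s|
        ≤ ∫ s in (0:ℝ)..t, |(t - s) ^ (α - 1) * q s * y s| :=
      intervalIntegral.abs_integral_le_integral_abs h0t
    have hb2 : (∫ s in (0:ℝ)..t, |(t - s) ^ (α - 1) * q s * y s|)
        ≤ ∫ s in (0:ℝ)..t, T ^ (α - 1) * C * g s := by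
      apply intervalIntegral.integral_mono_on h0t
      · exact hint1.abs
      · exact ((continuous_const.mul hg_cont).intervalIntegrable _ _)
      · intro s hs
        have hsmem : s ∈ Set.Icc (0:ℝ) T := hsub hs
        have h1 : |(t - s) ^ (α - 1)| = (t - s) ^ (α - 1) :=
          abs_of_nonneg (Real.rpow_nonneg (by linarith [hs.2]) _)
        rw [abs_mul, abs_mul, h1, hg_eq s hsmem]
        have h2 : (t - s) ^ (α - 1) ≤ T ^ (α - 1) :=
          Real.rpow_le_rpow (by linarith [hs.2]) (by linarith [hs.1]) hαm1
        have h3 : |q s| ≤ C := hC s hsmem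
        gcongr
    calc 1 / Real.Gamma α * |∫ s in (0:ℝ)..t, (t - s) ^ (α - 1) * q s * y s|
        ≤ 1 / Real.Gamma α * ∫ s in (0:ℝ)..t, T ^ (α - 1) * C * g s := by
          apply mul_le_mul_of_nonneg_left (le_trans hb1 hb2) (by positivity)
      _ = K * f t := by
          simp only [intervalIntegral.integral_const_mul, hKdef, hfdef]
          ring
  -- Gronwall
  have hf_zero : ∀ t ∈ Set.Icc (0:ℝ) T, ‖f t‖ ≤ gronwallBound 0 K 0 (t - 0) := by
    apply norm_le_gronwallBound_of_norm_deriv_right_le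
    · intro x _
      exact (hf_deriv x).continuousAt.continuousWithinAt
    · exact fun x _ => (hf_deriv x).hasDerivWithinAt
    · simp [hfdef]
    · intro x hx
      have hxm : x ∈ Set.Icc (0:ℝ) T := ⟨hx.1, hx.2.le⟩
      have h1 : ‖g x‖ = g x := abs_of_nonneg (hg_nonneg x)
      have h2 : g x = |y x| := hg_eq x hxm
      have h3 : |y x| ≤ K * f x := key x hxm
      have h4 : f x ≤ ‖f x‖ := le_abs_self _
      rw [h1, h2]
      calc |y x| ≤ K * f x := h3
        _ ≤ K * ‖f x‖ := mul_le_mul_of_nonneg_left h4 hK0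
        _ ≤ K * ‖f x‖ + 0 := by linarith
  intro t ht
  have : ‖f t‖ ≤ 0 := by simpa [gronwallBound_ε0_δ0] using hf_zero t ht
  have hft : f t = 0 := by
    have := abs_nonneg (f t)
    have : |f t| = 0 := le_antisymm ‹‖f t‖ ≤ 0› (abs_nonneg _)
    exact abs_eq_zero.mp this
  have := key t ht
  rw [hft, mul_zero] at this
  exact abs_eq_zero.mp (le_antisymm this (abs_nonneg _))
end
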